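/- Let f : ℍ → ℂ be given by a Fourier series f(z) = Σ_{m≥1} b(m)e^{2πimz} with |b(m)| ≤ C·m^A for some A > 0. Then for any rational q and any s ∈ ℂ with Re(s) > A+1, ∫_0^∞ f(iy+q)y^s dy/y = Γ(s)/(2π)^s · Σ_{m≥1} b(m)e^{2πimq}/m^s. -/

import Mathlib

open Complex Real

/-- Twisted Mellin transform of a Fourier series: if `f(z) = ∑_{m≥1} b(m)e^{2πimz}`
with `|b(m)| ≤ C·m^A`, then for rational `q` and `Re(s) > A+1`,
`∫_0^∞ f(iy+q)y^s dy/y = Γ(s)/(2π)^s · ∑_m b(m)e^{2πimq}/m^s`. -/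
theorem twisted_mellin_of_fourier_series (b : ℕ → ℂ) (C A : ℝ) (hA : 0 < A)
    (hb : ∀ m : ℕ, 0 < m → ‖b m‖ ≤ C * (m : ℝ) ^ A)
    (f : ℂ → ℂ)
    (hf : ∀ z : ℂ, 0 < z.im →
      f z = ∑' m : ℕ+, b m * Complex.exp (2 * π * I * m * z))
    (q : ℚ) (s : ℂ) (hs : A + 1 < s.re) :
    (∫ y in Set.Ioi (0 : ℝ), f (y * I + (q : ℂ)) * (y : ℂ) ^ (s - 1)) =
      Complex.Gamma s / (2 * π : ℂ) ^ s *
        ∑' m : ℕ+, b m * Complex.exp (2 * π * I * m * (q : ℂ)) / (m : ℂ) ^ s := by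
  have hπ := Real.pi_pos
  have hs0 : 0 < s.re := by linarith
  set a : ℕ+ → ℂ := fun m ↦ b m * Complex.exp (2 * π * I * m * (q : ℂ)) with ha
  have hC : 0 ≤ C := by
    have h := hb 1 one_pos
    rw [Nat.cast_one, Real.one_rpow, mul_one] at h
    exact (norm_nonneg _).trans h
  have hnorm_a : ∀ m : ℕ+, ‖a m‖ = ‖b m‖ := by
    intro m
    rw [ha]
    simp only [norm_mul, Complex.norm_exp]
    have : (2 * (π : ℂ) * I * (m : ℂ) * (q : ℂ)).re = 0 := by simp
    rw [this, Real.exp_zero, mul_one]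
  -- term identity
  have hterm : ∀ (m : ℕ+) (t : ℝ),
      b m * Complex.exp (2 * π * I * m * ((t : ℂ) * I + (q : ℂ)))
        = a m * (Real.exp (-(2 * π * m) * t) : ℝ) := by
    intro m t
    have hexp : 2 * (π : ℂ) * I * (m : ℂ) * ((t : ℂ) * I + (q : ℂ))
        = 2 * (π : ℂ) * I * (m : ℂ) * (q : ℂ) + ((-(2 * π * m) * t : ℝ) : ℂ) := by
      push_cast
      linear_combination (2 * (π : ℂ) * (m : ℂ) * (t : ℂ)) * Complex.I_mul_I
    rw [hexp, Complex.exp_add, ha, Complex.ofReal_exp]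
    ring
  have key : HasSum (fun m : ℕ+ ↦ Complex.Gamma s * a m / ((2 * π * (m : ℕ) : ℝ) : ℂ) ^ s)
      (mellin (fun t : ℝ ↦ f ((t : ℂ) * I + (q : ℂ))) s) := by
    apply hasSum_mellin (p := fun m : ℕ+ ↦ 2 * π * (m : ℕ))
    · intro m
      right
      have := m.pos
      positivity
    · exact hs0
    · intro t ht
      rw [Set.mem_Ioi] at ht
      have him : 0 < ((t : ℂ) * I + (q : ℂ)).im := by simpa using ht
      rw [hf _ him]
      have hsummable : Summable fun m : ℕ+ ↦ a m * (Real.exp (-(2 * π * m) * t) : ℂ) := by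
        apply Summable.of_norm
        have hr : ‖Real.exp (-(2 * π * t))‖ < 1 := by
          rw [Real.norm_eq_abs, abs_of_pos (Real.exp_pos _)]
          exact Real.exp_lt_one_iff.mpr (by nlinarith)
        have hgeom : Summable fun n : ℕ ↦ C * ((n : ℝ) ^ (⌈A⌉₊ : ℕ) * Real.exp (-(2 * π * t)) ^ n) :=
          (summable_pow_mul_geometric_of_norm_lt_one _ hr).mul_left C
        apply Summable.of_nonneg_of_le (fun m ↦ norm_nonneg _) _
          (hgeom.comp_injective (fun x y h ↦ PNat.coe_injective h) (i := fun m : ℕ+ ↦ (m : ℕ)))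
        intro m
        have hm1 : (1 : ℝ) ≤ (m : ℕ) := by exact_mod_cast m.one_le
        have hbd : ((m : ℕ) : ℝ) ^ A ≤ ((m : ℕ) : ℝ) ^ ((⌈A⌉₊ : ℕ) : ℝ) :=
          Real.rpow_le_rpow_of_exponent_le hm1 (by exact_mod_cast Nat.le_ceil A)
        have hexp_eq : Real.exp (-(2 * π * (m : ℕ)) * t) = Real.exp (-(2 * π * t)) ^ (m : ℕ) := by
          rw [← Real.exp_nat_mul]
          ring_nf
        calc ‖a m * (Real.exp (-(2 * π * m) * t) : ℂ)‖
            = ‖b m‖ * Real.exp (-(2 * π * m) * t) := by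
              rw [norm_mul, hnorm_a, Complex.norm_real, Real.norm_eq_abs,
                abs_of_pos (Real.exp_pos _)]
          _ ≤ C * ((m : ℕ) : ℝ) ^ A * Real.exp (-(2 * π * m) * t) := by
              apply mul_le_mul_of_nonneg_right (hb m m.pos) (Real.exp_pos _).le
          _ ≤ C * (((m : ℕ) : ℝ) ^ (⌈A⌉₊ : ℕ) * Real.exp (-(2 * π * t)) ^ ((m : ℕ))) := by
              rw [hexp_eq, mul_assoc]
              apply mul_le_mul_of_nonneg_left _ hC
              apply mul_le_mul_of_nonneg_right _ (pow_nonneg (Real.exp_pos _).le _)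
              rw [← Real.rpow_natCast ((m : ℕ) : ℝ) ⌈A⌉₊]
              exact hbd
      have : (∑' m : ℕ+, b m * Complex.exp (2 * π * I * m * ((t : ℂ) * I + (q : ℂ))))
          = ∑' m : ℕ+, a m * (Real.exp (-(2 * π * m) * t) : ℂ) :=
        tsum_congr fun m ↦ hterm m t
      rw [this]
      exact hsummable.hasSum
    · -- summability of norms over m^{s.re}
      have hsum2 : Summable fun n : ℕ ↦ (C * (2 * π) ^ (-s.re)) * (n : ℝ) ^ (A - s.re) :=
        (Real.summable_nat_rpow.mpr (by linarith)).mul_left _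
      apply Summable.of_nonneg_of_le
        (fun m ↦ by positivity) _
        (hsum2.comp_injective (fun x y h ↦ PNat.coe_injective h) (i := fun m : ℕ+ ↦ (m : ℕ)))
      intro m
      have hm0 : (0 : ℝ) < (m : ℕ) := by exact_mod_cast m.pos
      have hden : (0 : ℝ) < (2 * π * (m : ℕ)) ^ s.re := by positivity
      have h1 : ‖a m‖ / (2 * π * (m : ℕ)) ^ s.re ≤ (C * ((m : ℕ) : ℝ) ^ A) / (2 * π * (m : ℕ)) ^ s.re := by
        gcongr
        rw [hnorm_a]
        exact hb m m.pos
      refine h1.trans (le_of_eq ?_)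
      simp only [Function.comp_apply]
      rw [Real.mul_rpow (by positivity) hm0.le, Real.rpow_sub hm0,
        Real.rpow_neg (by positivity : (0:ℝ) ≤ 2 * π)]
      field_simp
  -- conclude
  have hL : (∫ y in Set.Ioi (0 : ℝ), f ((y : ℂ) * I + (q : ℂ)) * (y : ℂ) ^ (s - 1))
      = mellin (fun t : ℝ ↦ f ((t : ℂ) * I + (q : ℂ))) s := by
    rw [mellin]
    exact MeasureTheory.setIntegral_congr_fun measurableSet_Ioi fun t _ ↦ by rw [smul_eq_mul, mul_comm]
  rw [hL, ← key.tsum_eq, ← tsum_mul_left]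
  apply tsum_congr
  intro m
  have hsplit : ((2 * π * (m : ℕ) : ℝ) : ℂ) ^ s = (2 * (π : ℂ)) ^ s * ((m : ℕ+) : ℂ) ^ s := by
    have h1 : ((2 * π * (m : ℕ) : ℝ) : ℂ) = ((2 * π : ℝ) : ℂ) * (((m : ℕ) : ℝ) : ℂ) := by
      push_cast; ring
    rw [h1, mul_cpow_ofReal_nonneg (by positivity) (Nat.cast_nonneg _)]
    congr 2 <;> push_cast <;> ring
  rw [hsplit, ← div_mul_div_comm]
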